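/- Let m^(1),...,m^(N) be N distinct multisets over a set X. Then there exists a subset A of X with cardinality at most N such that the restrictions m^(1)|_A, ..., m^(N)|_A are pairwise distinct. -/
import Mathlib


/-- Given N distinct multisets (multiplicity functions) over X, there is a
subset A of X of cardinality at most N such that the restrictions to A are pairwise
distinct. -/
theorem distinct_restriction_of_distinct_multisets
    {X : Type*} [DecidableEq X] (N : ℕ) (m : Fin N → X → ℕ)
    (hm : Function.Injective m) :
    ∃ A : Finset X, A.card ≤ N ∧
      Function.Injective (fun i : Fin N => fun x : X => if x ∈ A then m i x else 0) := by
  classical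
  set res : Finset X → Fin N → X → ℕ := fun A i x => if x ∈ A then m i x else 0 with hres
  set r : Finset X → ℕ := fun A => (Finset.univ.image (res A)).card with hr
  have hle : ∀ A : Finset X, r A ≤ N := by
    intro A
    calc (Finset.univ.image (res A)).card ≤ (Finset.univ : Finset (Fin N)).card :=
          Finset.card_image_le
      _ = N := by simp
  have step : ∀ A : Finset X, r A < N → ∃ x ∉ A, r A < r (insert x A) := by
    intro A hA
    have hninj : ¬ Function.Injective (res A) := by
      intro h
      have h1 : (Finset.univ.image (res A)).card = N := by
        rw [Finset.card_image_of_injective _ h]; simp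
      simp only [hr] at hA
      omega
    obtain ⟨i, j, hij, hne⟩ := Function.not_injective_iff.mp hninj
    have hmne : m i ≠ m j := fun h => hne (hm h)
    obtain ⟨x, hx⟩ := Function.ne_iff.mp hmne
    have hxA : x ∉ A := by
      intro hxmem
      have := congrFun hij x
      simp only [hres, if_pos hxmem] at this
      exact hx this
    refine ⟨x, hxA, ?_⟩
    set g : (X → ℕ) → (X → ℕ) := fun f y => if y ∈ A then f y else 0 with hg
    have hcomp : res A = g ∘ res (insert x A) := by
      funext k y
      by_cases hy : y ∈ A
      · simp [hres, hg, hy, Finset.mem_insert_of_mem hy]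
      · simp [hres, hg, hy]
    have himg : Finset.univ.image (res A)
        = (Finset.univ.image (res (insert x A))).image g := by
      rw [Finset.image_image, hcomp]
    have hni : ¬ Set.InjOn g (Finset.univ.image (res (insert x A))) := by
      intro hinj
      have hi : res (insert x A) i ∈ (Finset.univ.image (res (insert x A)) : Finset (X → ℕ)) :=
        Finset.mem_image_of_mem _ (Finset.mem_univ i)
      have hj : res (insert x A) j ∈ (Finset.univ.image (res (insert x A)) : Finset (X → ℕ)) :=
        Finset.mem_image_of_mem _ (Finset.mem_univ j)
      have hgij : g (res (insert x A) i) = g (res (insert x A) j) :=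
        (congrFun hcomp i).symm.trans (hij.trans (congrFun hcomp j))
      have := hinj hi hj hgij
      have hxval := congrFun this x
      simp only [hres, if_pos (Finset.mem_insert_self x A)] at hxval
      exact hx hxval
    have hlt : ((Finset.univ.image (res (insert x A))).image g).card
        < (Finset.univ.image (res (insert x A))).card := by
      rcases lt_or_eq_of_le (Finset.card_image_le
        (s := Finset.univ.image (res (insert x A))) (f := g)) with h | h
      · exact h
      · exact absurd (Finset.card_image_iff.mp h) hni
    simp only [hr]
    rw [himg]
    exact hlt
  have main : ∀ k : ℕ, ∃ A : Finset X, A.card ≤ k ∧ min N (k + 1) ≤ r A := by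
    intro k
    induction k with
    | zero =>
      refine ⟨∅, le_refl _, ?_⟩
      rcases Nat.eq_zero_or_pos N with hN | hN
      · simp [hN]
      · have : 0 < r ∅ := by
          simp only [hr]
          exact Finset.card_pos.mpr ⟨res ∅ ⟨0, hN⟩, Finset.mem_image_of_mem _ (Finset.mem_univ _)⟩
        omega
    | succ k ih =>
      obtain ⟨A, hcard, hrA⟩ := ih
      by_cases h : N ≤ r A
      · exact ⟨A, le_trans hcard (Nat.le_succ k), by omega⟩
      · push_neg at h
        obtain ⟨x, hxA, hlt⟩ := step A h
        refine ⟨insert x A, ?_, ?_⟩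
        · calc (insert x A).card ≤ A.card + 1 := Finset.card_insert_le x A
            _ ≤ k + 1 := by omega
        · omega
  obtain ⟨A, hcard, hrA⟩ := main N
  have hrN : r A = N := le_antisymm (hle A) (by omega)
  refine ⟨A, hcard, ?_⟩
  have hinj : Set.InjOn (res A) (Finset.univ : Finset (Fin N)) := by
    apply Finset.card_image_iff.mp
    simp only [Finset.card_univ, Fintype.card_fin]
    exact hrN
  intro i j hijeq
  exact hinj (Finset.mem_univ i) (Finset.mem_univ j) hijeq
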